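/- arXiv:2410.22690 — 2 statements merged into one kernel-verified Lean document; each statement's English description precedes it below -/
import Mathlib

section
/- Corollary (advantage reward preserves value differences across policies, fixed-discount form): For every transition matrix P, all policies π, π', π̄, every reward function r : S × A → ℝ, every discount factor γ ∈ (0,1), and every state s ∈ S: V(π,P,r,γ)(s) − V(π',P,r,γ)(s) = V(π,P,r̃,γ)(s) − V(π',P,r̃,γ)(s), where r̃(s,a) = Δ(π̄,P,r,γ)(s,a). -/
open Filter Finset Topology

noncomputable section

variable {S A : Type} [Fintype S] [DecidableEq S] [Fintype A] [Nonempty S] [Nonempty A]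

/-- A policy assigns to each state a probability distribution over actions. -/
def IsPolicy (π : S → A → ℝ) : Prop :=
  (∀ s a, 0 ≤ π s a) ∧ ∀ s, ∑ a, π s a = 1

/-- A transition matrix assigns to each action and state a probability distribution
over next states. -/
def IsTransition (P : A → S → S → ℝ) : Prop :=
  (∀ a s s', 0 ≤ P a s s') ∧ ∀ a s, ∑ s', P a s s' = 1

/-- The state-transition matrix induced by a policy and a transition matrix. -/
def Mmat (π : S → A → ℝ) (P : A → S → S → ℝ) : Matrix S S ℝ :=
  Matrix.of fun s s' => ∑ a, π s a * P a s s'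

/-- Expected one-step reward under policy `π`. -/
def rpi (π : S → A → ℝ) (r : S × A → ℝ) (s : S) : ℝ := ∑ a, π s a * r (s, a)

/-- Discounted value function. -/
def Vval (π : S → A → ℝ) (P : A → S → S → ℝ) (r : S × A → ℝ) (γ : ℝ) (s : S) : ℝ :=
  ∑' t : ℕ, γ ^ t * ((Mmat π P ^ t).mulVec (rpi π r)) s

/-- State-action value function. -/
def Qval (π : S → A → ℝ) (P : A → S → S → ℝ) (r : S × A → ℝ) (γ : ℝ) (s : S) (a : A) : ℝ :=
  r (s, a) + γ * ∑ s', P a s s' * Vval π P r γ s'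

/-- Advantage function. -/
def Adv (π : S → A → ℝ) (P : A → S → S → ℝ) (r : S × A → ℝ) (γ : ℝ) (s : S) (a : A) : ℝ :=
  Qval π P r γ s a - Vval π P r γ s

lemma Mmat_nonneg (P : A → S → S → ℝ) (π : S → A → ℝ) (hP : IsTransition P) (hπ : IsPolicy π) :
    ∀ s s', 0 ≤ Mmat π P s s' := fun s s' =>
  Finset.sum_nonneg fun a _ => mul_nonneg (hπ.1 s a) (hP.1 a s s')

lemma Mmat_rowsum (P : A → S → S → ℝ) (π : S → A → ℝ) (hP : IsTransition P) (hπ : IsPolicy π) :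
    ∀ s, ∑ s', Mmat π P s s' = 1 := by
  intro s
  simp only [Mmat, Matrix.of_apply]
  rw [Finset.sum_comm]
  simp only [← Finset.mul_sum, hP.2]
  simpa using hπ.2 s

lemma abs_mulVec_le (M : Matrix S S ℝ) (h0 : ∀ s s', 0 ≤ M s s')
    (h1 : ∀ s, ∑ s', M s s' = 1) {v : S → ℝ} {C : ℝ} (hC : ∀ s, |v s| ≤ C) (s : S) :
    |M.mulVec v s| ≤ C := by
  have h : M.mulVec v s = ∑ s', M s s' * v s' := rfl
  rw [h]
  calc |∑ s', M s s' * v s'| ≤ ∑ s', |M s s' * v s'| := Finset.abs_sum_le_sum_abs _ _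
    _ ≤ ∑ s', M s s' * C := Finset.sum_le_sum fun s' _ => by
        rw [abs_mul, abs_of_nonneg (h0 s s')]
        exact mul_le_mul_of_nonneg_left (hC s') (h0 s s')
    _ = C := by rw [← Finset.sum_mul, h1 s, one_mul]

lemma abs_pow_mulVec_le (M : Matrix S S ℝ) (h0 : ∀ s s', 0 ≤ M s s')
    (h1 : ∀ s, ∑ s', M s s' = 1) {v : S → ℝ} {C : ℝ} (hC : ∀ s, |v s| ≤ C) :
    ∀ t s, |((M ^ t).mulVec v) s| ≤ C := by
  intro t
  induction t with
  | zero => simpa [Matrix.one_mulVec] using hC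
  | succ t ih =>
    intro s
    rw [pow_succ', ← Matrix.mulVec_mulVec]
    exact abs_mulVec_le M h0 h1 ih s

lemma summable_aux (M : Matrix S S ℝ) (h0 : ∀ s s', 0 ≤ M s s')
    (h1 : ∀ s, ∑ s', M s s' = 1) (v : S → ℝ) {γ : ℝ} (hγ : γ ∈ Set.Ioo (0:ℝ) 1) (s : S) :
    Summable (fun t : ℕ => γ ^ t * ((M ^ t).mulVec v) s) := by
  have hC : ∀ s, |v s| ≤ ∑ s', |v s'| := fun s =>
    Finset.single_le_sum (f := fun s' => |v s'|) (fun _ _ => abs_nonneg _) (Finset.mem_univ s)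
  apply Summable.of_norm_bounded
    ((summable_geometric_of_lt_one hγ.1.le hγ.2).mul_left (∑ s', |v s'|))
  intro t
  rw [Real.norm_eq_abs, abs_mul, abs_pow, abs_of_pos hγ.1, mul_comm]
  exact mul_le_mul_of_nonneg_right (abs_pow_mulVec_le M h0 h1 hC t s) (pow_nonneg hγ.1.le t)

lemma bellman (π : S → A → ℝ) (P : A → S → S → ℝ) (hP : IsTransition P) (hπ : IsPolicy π)
    (r : S × A → ℝ) {γ : ℝ} (hγ : γ ∈ Set.Ioo (0:ℝ) 1) (s : S) :
    Vval π P r γ s = rpi π r s + γ * (Mmat π P).mulVec (Vval π P r γ) s := by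
  set M := Mmat π P with hM
  have h0 := Mmat_nonneg P π hP hπ
  have h1 := Mmat_rowsum P π hP hπ
  have hsum : Summable (fun t : ℕ => γ ^ t * ((M ^ t).mulVec (rpi π r)) s) :=
    summable_aux M h0 h1 _ hγ s
  rw [Vval, Summable.tsum_eq_zero_add hsum]
  congr 1
  · simp [Matrix.one_mulVec]
  have key : ∀ t : ℕ, γ ^ (t+1) * ((M ^ (t+1)).mulVec (rpi π r)) s
      = ∑ s', γ * M s s' * (γ ^ t * ((M ^ t).mulVec (rpi π r)) s') := by
    intro t
    rw [pow_succ' M t, ← Matrix.mulVec_mulVec]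
    have h : M.mulVec ((M ^ t).mulVec (rpi π r)) s
        = ∑ s', M s s' * ((M ^ t).mulVec (rpi π r)) s' := rfl
    rw [h, Finset.mul_sum]
    exact Finset.sum_congr rfl fun s' _ => by ring
  simp only [key]
  rw [Summable.tsum_finsetSum (fun s' _ => ((summable_aux M h0 h1 _ hγ s').mul_left (γ * M s s')))]
  have h : M.mulVec (Vval π P r γ) s = ∑ s', M s s' * Vval π P r γ s' := rfl
  rw [h, Finset.mul_sum]
  exact Finset.sum_congr rfl fun s' _ => by
    rw [tsum_mul_left]; rw [Vval]; ring

lemma contraction (M : Matrix S S ℝ) (h0 : ∀ s s', 0 ≤ M s s')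
    (h1 : ∀ s, ∑ s', M s s' = 1) {γ : ℝ} (hγ : γ ∈ Set.Ioo (0:ℝ) 1)
    (d : S → ℝ) (hd : ∀ s, d s = γ * M.mulVec d s) : ∀ s, d s = 0 := by
  obtain ⟨s0, -, hs0⟩ := Finset.exists_max_image Finset.univ (fun s => |d s|)
    ⟨Classical.arbitrary S, Finset.mem_univ _⟩
  have hb : ∀ s, |d s| ≤ |d s0| := fun s => hs0 s (Finset.mem_univ s)
  have h2 : |d s0| ≤ γ * |d s0| := by
    calc |d s0| = γ * |M.mulVec d s0| := by rw [hd s0, abs_mul, abs_of_pos hγ.1]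
    _ ≤ γ * |d s0| := mul_le_mul_of_nonneg_left (abs_mulVec_le M h0 h1 hb s0) hγ.1.le
  have h3 : |d s0| = 0 := le_antisymm (by nlinarith [hγ.2, abs_nonneg (d s0)]) (abs_nonneg _)
  intro s
  exact abs_eq_zero.mp (le_antisymm ((hb s).trans h3.le) (abs_nonneg _))

lemma rpi_adv (P : A → S → S → ℝ) (π πbar : S → A → ℝ) (hπ : IsPolicy π)
    (r : S × A → ℝ) (γ : ℝ) (s : S) :
    rpi π (fun p => Adv πbar P r γ p.1 p.2) s
      = rpi π r s + γ * (Mmat π P).mulVec (Vval πbar P r γ) s - Vval πbar P r γ s := by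
  have hM : (Mmat π P).mulVec (Vval πbar P r γ) s
      = ∑ a, π s a * ∑ s', P a s s' * Vval πbar P r γ s' := by
    have h : (Mmat π P).mulVec (Vval πbar P r γ) s
        = ∑ s', (∑ a, π s a * P a s s') * Vval πbar P r γ s' := rfl
    rw [h]
    simp only [Finset.sum_mul]
    rw [Finset.sum_comm]
    exact Finset.sum_congr rfl fun a _ => by
      rw [Finset.mul_sum]
      exact Finset.sum_congr rfl fun s' _ => by ring
  simp only [rpi, Adv, Qval]
  rw [hM]
  have hone := hπ.2 s
  simp only [mul_sub, mul_add, Finset.sum_sub_distrib, Finset.sum_add_distrib, Finset.mul_sum]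
  rw [← Finset.sum_mul, hone, one_mul]
  congr 1
  congr 1
  exact Finset.sum_congr rfl fun a _ => Finset.sum_congr rfl fun s' _ => by ring

lemma Vval_adv (P : A → S → S → ℝ) (π πbar : S → A → ℝ)
    (hP : IsTransition P) (hπ : IsPolicy π) (hπbar : IsPolicy πbar)
    (r : S × A → ℝ) {γ : ℝ} (hγ : γ ∈ Set.Ioo (0:ℝ) 1) (s : S) :
    Vval π P (fun p => Adv πbar P r γ p.1 p.2) γ s
      = Vval π P r γ s - Vval πbar P r γ s := by
  set rt := fun p : S × A => Adv πbar P r γ p.1 p.2 with hrt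
  set Vb := Vval πbar P r γ with hVb
  set W := fun s => Vval π P rt γ s - (Vval π P r γ s - Vb s) with hW
  have h0 := Mmat_nonneg P π hP hπ
  have h1 := Mmat_rowsum P π hP hπ
  have hWfix : ∀ s, W s = γ * (Mmat π P).mulVec W s := by
    intro s
    have lin : (Mmat π P).mulVec W s
        = (Mmat π P).mulVec (Vval π P rt γ) s
          - ((Mmat π P).mulVec (Vval π P r γ) s - (Mmat π P).mulVec Vb s) := by
      have h : ∀ v : S → ℝ, (Mmat π P).mulVec v s = ∑ s', Mmat π P s s' * v s' := fun v => rfl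
      simp only [h, hW, mul_sub, Finset.sum_sub_distrib]
    rw [lin]
    simp only [hW]
    rw [bellman π P hP hπ rt hγ s, bellman π P hP hπ r hγ s, rpi_adv P π πbar hπ r γ s]
    ring
  have hz := contraction (Mmat π P) h0 h1 hγ W hWfix s
  simp only [hW] at hz
  linarith

/-- **Advantage reward preserves value differences across policies (fixed discount).**
`V(π,P,r,γ)(s) − V(π',P,r,γ)(s) = V(π,P,r̃,γ)(s) − V(π',P,r̃,γ)(s)`
where `r̃ = Δ(π̄,P,r,γ)`. -/
theorem advantage_reward_preserves_value_differences
    (P : A → S → S → ℝ) (π π' πbar : S → A → ℝ)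
    (hP : IsTransition P) (hπ : IsPolicy π) (hπ' : IsPolicy π') (hπbar : IsPolicy πbar)
    (r : S × A → ℝ) (γ : ℝ) (hγ : γ ∈ Set.Ioo (0 : ℝ) 1) (s : S) :
    Vval π P r γ s - Vval π' P r γ s
      = Vval π P (fun p => Adv πbar P r γ p.1 p.2) γ s
        - Vval π' P (fun p => Adv πbar P r γ p.1 p.2) γ s := by
  rw [Vval_adv P π πbar hP hπ hπbar r hγ s, Vval_adv P π' πbar hP hπ' hπbar r hγ s]
  ring
end
end

section
/- Lemma (lottery preferences via relative value, Markov form): Let (π,P) be unichain and let r : S × A → ℝ. For a partial trajectory h = ([(s_0,a_0),…,(s_{T−1},a_{T−1})], z), the expected discounted return of the Markov lottery induced by (π,P) starting with h is v(π,P,r,γ)(h) = ∑_{t=0}^{T−1} γ^t r(s_t,a_t) + γ^T V(π,P,r,γ)(z). Then for all partial trajectories h, h', the limit lim_{γ→1⁻} ( v(π,P,r,γ)(h) − v(π,P,r,γ)(h') ) exists and equals B(r̃,Ṽ)(h) − B(r̃,Ṽ)(h'), where r̃ = r̃(π,P,r) is the relative reward and Ṽ = Ṽ(π,P,r) is the relative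 value function. -/
open Filter Finset Topology

noncomputable section

variable {S A : Type} [Fintype S] [DecidableEq S] [Fintype A] [Nonempty S] [Nonempty A]

/-- `(π, P)` is unichain with limiting distribution `μ`: for every `s'`, the Cesàro
averages of `(M(π,P)^t)(s,s')` converge to `μ s'`, independently of `s`. -/
def Unichain (π : S → A → ℝ) (P : A → S → S → ℝ) (μ : S → ℝ) : Prop :=
  ∀ s s', Tendsto (fun T : ℕ => (∑ t ∈ range T, (Mmat π P ^ t) s s') / (T : ℝ))
    atTop (𝓝 (μ s'))

/-- The bootstrapped return of a partial trajectory `h = (pairs, z)`. -/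
def Breturn (r : S × A → ℝ) (V : S → ℝ) (h : List (S × A) × S) : ℝ :=
  (h.1.map r).sum + V h.2

set_option linter.unusedSectionVars false

lemma Mpow_stoch (π : S → A → ℝ) (P : A → S → S → ℝ) (hπ : IsPolicy π)
    (hP : IsTransition P) (k : ℕ) :
    (∀ s s', 0 ≤ (Mmat π P ^ k) s s') ∧ ∀ s, ∑ s', (Mmat π P ^ k) s s' = 1 := by
  have hM0 : ∀ s s', 0 ≤ Mmat π P s s' := fun s s' =>
    Finset.sum_nonneg fun a _ => mul_nonneg (hπ.1 s a) (hP.1 a s s')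
  have hM1 : ∀ s, ∑ s', Mmat π P s s' = 1 := by
    intro s
    simp only [Mmat, Matrix.of_apply]
    rw [Finset.sum_comm]
    simp [← Finset.mul_sum, hP.2, hπ.2 s]
  induction k with
  | zero =>
    refine ⟨fun s s' => ?_, fun s => ?_⟩
    · simp only [pow_zero, Matrix.one_apply]
      split <;> norm_num
    · simp [Matrix.one_apply, Finset.sum_ite_eq']
  | succ k ih =>
    refine ⟨fun s s' => ?_, fun s => ?_⟩
    · rw [pow_succ, Matrix.mul_apply]
      exact Finset.sum_nonneg fun j _ => mul_nonneg (ih.1 s j) (hM0 j s')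
    · simp only [pow_succ, Matrix.mul_apply]
      rw [Finset.sum_comm]
      simp [← Finset.mul_sum, hM1, ih.2 s]

lemma mulVec_bound (π : S → A → ℝ) (P : A → S → S → ℝ) (hπ : IsPolicy π)
    (hP : IsTransition P) (k : ℕ) (v : S → ℝ) (s : S) :
    |((Mmat π P ^ k).mulVec v) s| ≤ ∑ j, |v j| := by
  obtain ⟨h0, h1⟩ := Mpow_stoch π P hπ hP k
  have hle : ∀ j, (Mmat π P ^ k) s j ≤ 1 := by
    intro j
    calc (Mmat π P ^ k) s j ≤ ∑ j', (Mmat π P ^ k) s j' :=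
      Finset.single_le_sum (fun i _ => h0 s i) (Finset.mem_univ j)
    _ = 1 := h1 s
  simp only [Matrix.mulVec, dotProduct]
  calc |∑ j, (Mmat π P ^ k) s j * v j| ≤ ∑ j, |(Mmat π P ^ k) s j * v j| :=
        Finset.abs_sum_le_sum_abs _ _
    _ ≤ ∑ j, |v j| := by
        refine Finset.sum_le_sum fun j _ => ?_
        rw [abs_mul, abs_of_nonneg (h0 s j)]
        exact mul_le_of_le_one_left (abs_nonneg _) (hle j)

lemma summable_pow_mulVec (π : S → A → ℝ) (P : A → S → S → ℝ) (hπ : IsPolicy π)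
    (hP : IsTransition P) (v : S → ℝ) (s : S) {γ : ℝ} (h0 : 0 ≤ γ) (h1 : γ < 1) :
    Summable (fun k : ℕ => γ ^ k * ((Mmat π P ^ k).mulVec v) s) := by
  refine Summable.of_norm_bounded
    ((summable_geometric_of_lt_one h0 h1).mul_left (∑ j, |v j|)) fun k => ?_
  rw [Real.norm_eq_abs, abs_mul, abs_pow, abs_of_nonneg h0, mul_comm]
  exact mul_le_mul_of_nonneg_right (mulVec_bound π P hπ hP k v s) (pow_nonneg h0 k)

lemma mulVec_const (π : S → A → ℝ) (P : A → S → S → ℝ) (hπ : IsPolicy π)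
    (hP : IsTransition P) (k : ℕ) (c : ℝ) (s : S) :
    ((Mmat π P ^ k).mulVec (fun _ => c)) s = c := by
  simp only [Matrix.mulVec, dotProduct]
  rw [← Finset.sum_mul, (Mpow_stoch π P hπ hP k).2 s, one_mul]

lemma list_sum_map_sub (l : List (S × A)) (f : S × A → ℝ) (c : ℝ) :
    (l.map (fun p => f p - c)).sum = (l.map f).sum - l.length * c := by
  induction l with
  | nil => simp
  | cons a t ih => simp [ih]; ring

lemma fin_sum_get (l : List (S × A)) (f : S × A → ℝ) :
    ∑ t : Fin l.length, f (l.get t) = (l.map f).sum := by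
  induction l with
  | nil => simp
  | cons a t ih => simp [Fin.sum_univ_succ, ih]

lemma Vval_split (π : S → A → ℝ) (P : A → S → S → ℝ) (hπ : IsPolicy π)
    (hP : IsTransition P) (r : S × A → ℝ) (c : ℝ) {γ : ℝ} (h0 : 0 ≤ γ) (h1 : γ < 1)
    (s : S) :
    Vval π P r γ s
      = (∑' k : ℕ, γ ^ k * ((Mmat π P ^ k).mulVec (fun s' => rpi π r s' - c)) s)
        + c * (1 - γ)⁻¹ := by
  have hsum1 := summable_pow_mulVec π P hπ hP (fun s' => rpi π r s' - c) s h0 h1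
  have hgeo : Summable (fun k : ℕ => c * γ ^ k) :=
    (summable_geometric_of_lt_one h0 h1).mul_left c
  have key : ∀ k : ℕ, γ ^ k * ((Mmat π P ^ k).mulVec (rpi π r)) s
      = γ ^ k * ((Mmat π P ^ k).mulVec (fun s' => rpi π r s' - c)) s + c * γ ^ k := by
    intro k
    have hmv : ((Mmat π P ^ k).mulVec (rpi π r)) s
        = ((Mmat π P ^ k).mulVec (fun s' => rpi π r s' - c)) s + c := by
      have hc := mulVec_const π P hπ hP k c s
      simp only [Matrix.mulVec, dotProduct] at hc ⊢
      have hsp : ∑ j, (Mmat π P ^ k) s j * rpi π r j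
          = ∑ j, ((Mmat π P ^ k) s j * (rpi π r j - c) + (Mmat π P ^ k) s j * c) :=
        Finset.sum_congr rfl fun j _ => by ring
      rw [hsp, Finset.sum_add_distrib, hc]
    rw [hmv]; ring
  rw [Vval, tsum_congr key, Summable.tsum_add hsum1 hgeo, tsum_mul_left,
    tsum_geometric_of_lt_one h0 h1]

/-- **Lottery preferences via relative value (Markov form).** For partial trajectories
`h, h'`, with `v(π,P,r,γ)(h) = ∑_{t<T} γ^t r(s_t,a_t) + γ^T V(π,P,r,γ)(z)` the expected
discounted return of the Markov lottery induced by `(π,P)` starting with `h`,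
the limit `lim_{γ→1⁻} ( v(π,P,r,γ)(h) − v(π,P,r,γ)(h') )` exists and equals
`B(r̃,Ṽ)(h) − B(r̃,Ṽ)(h')`, where `r̃` is the relative reward and `Ṽ` the relative value
function. -/
theorem lottery_preferences_via_relative_value
    (π : S → A → ℝ) (P : A → S → S → ℝ)
    (hπ : IsPolicy π) (hP : IsTransition P)
    (μ : S → ℝ) (huni : Unichain π P μ)
    (r : S × A → ℝ)
    (Vrel : S → ℝ)
    (hVrel : ∀ s : S, Tendsto
      (fun γ : ℝ => ∑' k : ℕ, γ ^ k *
        ((Mmat π P ^ k).mulVec (fun s' => rpi π r s' - ∑ s'', μ s'' * rpi π r s'')) s)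
      (𝓝[<] (1 : ℝ)) (𝓝 (Vrel s)))
    (h h' : List (S × A) × S) :
    Tendsto
      (fun γ : ℝ =>
        ((∑ t : Fin h.1.length, γ ^ (t : ℕ) * r (h.1.get t))
            + γ ^ h.1.length * Vval π P r γ h.2)
          - ((∑ t : Fin h'.1.length, γ ^ (t : ℕ) * r (h'.1.get t))
            + γ ^ h'.1.length * Vval π P r γ h'.2))
      (𝓝[<] (1 : ℝ))
      (𝓝 (Breturn (fun p => r p - ∑ s'', μ s'' * rpi π r s'') Vrel h
            - Breturn (fun p => r p - ∑ s'', μ s'' * rpi π r s'') Vrel h')) := by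
  set c : ℝ := ∑ s'', μ s'' * rpi π r s'' with hc
  set W : ℝ → S → ℝ := fun γ s =>
    ∑' k : ℕ, γ ^ k * ((Mmat π P ^ k).mulVec (fun s' => rpi π r s' - c)) s with hWdef
  -- the limit value
  have hL : Breturn (fun p => r p - c) Vrel h - Breturn (fun p => r p - c) Vrel h'
      = ((∑ t : Fin h.1.length, r (h.1.get t)) - ∑ t : Fin h'.1.length, r (h'.1.get t))
        + (Vrel h.2 - Vrel h'.2) + c * ((h'.1.length : ℝ) - (h.1.length : ℝ)) := by
    simp only [Breturn]
    rw [list_sum_map_sub, list_sum_map_sub, ← fin_sum_get h.1 r, ← fin_sum_get h'.1 r]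
    ring
  rw [hL]
  -- the surrogate function
  have hmem : Set.Ioo (0 : ℝ) 1 ∈ 𝓝[<] (1 : ℝ) :=
    Ioo_mem_nhdsLT_of_mem (by constructor <;> norm_num)
  refine Tendsto.congr' (f₁ := fun γ : ℝ =>
      ((∑ t : Fin h.1.length, γ ^ (t : ℕ) * r (h.1.get t))
        - ∑ t : Fin h'.1.length, γ ^ (t : ℕ) * r (h'.1.get t))
      + (γ ^ h.1.length * W γ h.2 - γ ^ h'.1.length * W γ h'.2)
      + c * ((∑ t ∈ range h'.1.length, γ ^ t) - ∑ t ∈ range h.1.length, γ ^ t)) ?_ ?_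
  · filter_upwards [hmem] with γ hγ
    have h0 : (0 : ℝ) ≤ γ := le_of_lt hγ.1
    have h1 : γ < 1 := hγ.2
    have hne : γ ≠ 1 := ne_of_lt h1
    have hne' : γ - 1 ≠ 0 := sub_ne_zero.mpr hne
    have h1γ : (1 : ℝ) - γ ≠ 0 := sub_ne_zero.mpr (ne_of_lt h1).symm
    have hu : (1 - γ) * (1 - γ)⁻¹ = 1 := mul_inv_cancel₀ h1γ
    have hg : ∀ n : ℕ, (∑ t ∈ range n, γ ^ t) * (1 - γ) = 1 - γ ^ n := by
      intro n
      have hgm := geom_sum_mul γ n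
      calc (∑ t ∈ range n, γ ^ t) * (1 - γ)
          = -((∑ t ∈ range n, γ ^ t) * (γ - 1)) := by ring
        _ = 1 - γ ^ n := by rw [hgm]; ring
    rw [Vval_split π P hπ hP r c h0 h1, Vval_split π P hπ hP r c h0 h1]
    simp only [hWdef]
    linear_combination (c * (1 - γ)⁻¹) * hg h'.1.length
      - (c * (1 - γ)⁻¹) * hg h.1.length
      + c * ((∑ t ∈ range h.1.length, γ ^ t) - ∑ t ∈ range h'.1.length, γ ^ t) * hu
  · have hpoly : ∀ (L : List (S × A)), Tendsto
        (fun γ : ℝ => ∑ t : Fin L.length, γ ^ (t : ℕ) * r (L.get t)) (𝓝[<] (1 : ℝ))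
        (𝓝 (∑ t : Fin L.length, r (L.get t))) := by
      intro L
      have : Continuous fun γ : ℝ => ∑ t : Fin L.length, γ ^ (t : ℕ) * r (L.get t) := by
        continuity
      have h2 : Tendsto (fun γ : ℝ => ∑ t : Fin L.length, γ ^ (t : ℕ) * r (L.get t))
          (𝓝[<] (1 : ℝ)) (𝓝 (∑ t : Fin L.length, (1:ℝ) ^ (t : ℕ) * r (L.get t))) :=
        (this.tendsto 1).mono_left nhdsWithin_le_nhds
      simpa using h2
    have hpow : ∀ n : ℕ, Tendsto (fun γ : ℝ => γ ^ n) (𝓝[<] (1 : ℝ)) (𝓝 1) := fun n =>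
      ((continuous_pow n).tendsto' 1 1 (one_pow n)).mono_left nhdsWithin_le_nhds
    have hgs : ∀ n : ℕ, Tendsto (fun γ : ℝ => ∑ t ∈ range n, γ ^ t) (𝓝[<] (1 : ℝ))
        (𝓝 (n : ℝ)) := by
      intro n
      have : Continuous fun γ : ℝ => ∑ t ∈ range n, γ ^ t := by continuity
      have h2 : Tendsto (fun γ : ℝ => ∑ t ∈ range n, γ ^ t)
          (𝓝[<] (1 : ℝ)) (𝓝 (∑ t ∈ range n, (1:ℝ) ^ t)) :=
        (this.tendsto 1).mono_left nhdsWithin_le_nhds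
      simpa using h2
    have hWz : Tendsto (fun γ : ℝ => γ ^ h.1.length * W γ h.2) (𝓝[<] (1 : ℝ)) (𝓝 (Vrel h.2)) := by
      simpa using (hpow h.1.length).mul (hVrel h.2)
    have hWz' : Tendsto (fun γ : ℝ => γ ^ h'.1.length * W γ h'.2) (𝓝[<] (1 : ℝ))
        (𝓝 (Vrel h'.2)) := by
      simpa using (hpow h'.1.length).mul (hVrel h'.2)
    exact (((hpoly h.1).sub (hpoly h'.1)).add (hWz.sub hWz')).add
      (((hgs h'.1.length).sub (hgs h.1.length)).const_mul c)
end
end
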